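/- Let Fᶜ : ℝ → [0,1] be nonincreasing with Fᶜ = 1 on (−∞, 0) and right-continuous, and let Ā : ℝ≥0 → ℝ≥0 be continuous nondecreasing with Ā(0) = 0 and Ā(t) − Ā(s) ≤ λ*(t − s) for all 0 ≤ s ≤ t. Define 𝔍̄₁(t,x) := ∫_{(t−x)⁺}^{t} Fᶜ(t−s) dĀ(s). Then 𝔍̄₁ is jointly continuous in (t,x) on ℝ≥0 × ℝ≥0 whenever Fᶜ is continuous, and in general satisfies |𝔍̄₁(t',x') − 𝔍̄₁(t,x)| ≤ λ* ∫_{(t−x)⁺}^{t} |Fᶜ(t−s) − Fᶜ(t'−s)| ds + 2 λ* (|t−t'| + |x−x'|) for t ≤ t', |x − x'| ≤ |t'−t| + |x'−x|. -/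

import Mathlib

open MeasureTheory intervalIntegral

lemma J1aux_measure_le (lamStar : ℝ) (hlamStar : 0 < lamStar)
    (A : StieltjesFunction ℝ) (hA_cont : Continuous A)
    (hA_neg : ∀ x, x ≤ 0 → A x = 0)
    (hA_lip : ∀ s t, 0 ≤ s → s ≤ t → A t - A s ≤ lamStar * (t - s)) :
    A.measure ≤ (ENNReal.ofReal lamStar) • volume := by
  have hCmono : Monotone (fun x => lamStar * max x 0 - A x) := by
    intro x y hxy
    rcases le_or_gt y 0 with hy | hy
    · simp [max_eq_right (hxy.trans hy), max_eq_right hy, hA_neg x (hxy.trans hy), hA_neg y hy]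
    rcases le_or_gt x 0 with hx | hx
    · have h0 := hA_lip 0 y le_rfl hy.le
      rw [hA_neg 0 le_rfl] at h0
      simp only [max_eq_right hx, max_eq_left hy.le, hA_neg x hx]
      linarith
    · have h0 := hA_lip x y hx.le hxy
      simp only [max_eq_left hy.le, max_eq_left hx.le]
      linarith
  set C : StieltjesFunction ℝ :=
    ⟨fun x => lamStar * max x 0 - A x, hCmono,
      fun x => ((continuous_const.mul (continuous_id'.max continuous_const)).sub
        hA_cont).continuousWithinAt⟩ with hC_def
  have hsum : (A + C).measure = ((ENNReal.ofReal lamStar) • volume).restrict (Set.Ioi 0) := by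
    refine Measure.ext_of_Ioc _ _ (fun a b hab => ?_)
    rw [StieltjesFunction.measure_Ioc]
    have hfun : ∀ z : ℝ, (A + C) z = lamStar * max z 0 := fun z => by
      show A z + (lamStar * max z 0 - A z) = _
      ring
    rw [hfun, hfun, Measure.restrict_apply measurableSet_Ioc, Measure.smul_apply, smul_eq_mul]
    have hinter : Set.Ioc a b ∩ Set.Ioi 0 = Set.Ioc (max a 0) b := by
      ext z
      simp only [Set.mem_inter_iff, Set.mem_Ioc, Set.mem_Ioi, max_lt_iff]
      tauto
    rw [hinter, Real.volume_Ioc]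
    rcases le_or_gt b 0 with hb | hb
    · rw [max_eq_right hb, max_eq_right (hab.le.trans hb),
        ENNReal.ofReal_of_nonpos (by linarith : b - 0 ≤ 0)]
      simp
    · rw [max_eq_left hb.le, ← ENNReal.ofReal_mul hlamStar.le]
      congr 1
      ring
  calc A.measure ≤ A.measure + C.measure := Measure.le_add_right le_rfl
    _ = (A + C).measure := (StieltjesFunction.measure_add A C).symm
    _ = ((ENNReal.ofReal lamStar) • volume).restrict (Set.Ioi 0) := hsum
    _ ≤ (ENNReal.ofReal lamStar) • volume := Measure.restrict_le_self

lemma J1aux_integral_le (lamStar : ℝ) (hlamStar : 0 < lamStar)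
    (A : StieltjesFunction ℝ) (hle : A.measure ≤ (ENNReal.ofReal lamStar) • volume)
    (g : ℝ → ℝ) (hg : Measurable g) (hg0 : ∀ s, 0 ≤ g s) (hg2 : ∀ s, g s ≤ 2)
    (a b : ℝ) :
    ∫ s in Set.Ioc a b, g s ∂A.measure ≤ lamStar * ∫ s in Set.Ioc a b, g s := by
  have h1 : ∫ s in Set.Ioc a b, g s ∂A.measure
      = (∫⁻ s in Set.Ioc a b, ENNReal.ofReal (g s) ∂A.measure).toReal := by
    rw [integral_eq_lintegral_of_nonneg_ae (ae_of_all _ hg0) hg.aestronglyMeasurable]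
  have h2 : ∫ s in Set.Ioc a b, g s
      = (∫⁻ s in Set.Ioc a b, ENNReal.ofReal (g s)).toReal := by
    rw [integral_eq_lintegral_of_nonneg_ae (ae_of_all _ hg0) hg.aestronglyMeasurable]
  have hfin : (∫⁻ s in Set.Ioc a b, ENNReal.ofReal (g s)) ≤ 2 * volume (Set.Ioc a b) := by
    calc (∫⁻ s in Set.Ioc a b, ENNReal.ofReal (g s))
        ≤ ∫⁻ _ in Set.Ioc a b, (2 : ENNReal) := by
          refine lintegral_mono fun s => ?_
          calc ENNReal.ofReal (g s) ≤ ENNReal.ofReal 2 := ENNReal.ofReal_le_ofReal (hg2 s)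
            _ = 2 := by norm_num
      _ = 2 * volume (Set.Ioc a b) := by
          rw [lintegral_const, Measure.restrict_apply_univ]
  have hfin' : (∫⁻ s in Set.Ioc a b, ENNReal.ofReal (g s)) ≠ ⊤ := by
    refine (hfin.trans_lt ?_).ne
    rw [Real.volume_Ioc]
    exact ENNReal.mul_lt_top (by norm_num) ENNReal.ofReal_lt_top
  have hcomp : (∫⁻ s in Set.Ioc a b, ENNReal.ofReal (g s) ∂A.measure)
      ≤ ENNReal.ofReal lamStar * ∫⁻ s in Set.Ioc a b, ENNReal.ofReal (g s) := by
    calc (∫⁻ s in Set.Ioc a b, ENNReal.ofReal (g s) ∂A.measure)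
        ≤ ∫⁻ s in Set.Ioc a b, ENNReal.ofReal (g s) ∂((ENNReal.ofReal lamStar) • volume) :=
          lintegral_mono' (Measure.restrict_mono (subset_refl _) hle) le_rfl
      _ = ENNReal.ofReal lamStar * ∫⁻ s in Set.Ioc a b, ENNReal.ofReal (g s) := by
          rw [Measure.restrict_smul, lintegral_smul_measure, smul_eq_mul]
  rw [h1, h2]
  calc (∫⁻ s in Set.Ioc a b, ENNReal.ofReal (g s) ∂A.measure).toReal
      ≤ (ENNReal.ofReal lamStar * ∫⁻ s in Set.Ioc a b, ENNReal.ofReal (g s)).toReal :=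
        ENNReal.toReal_mono (ENNReal.mul_ne_top ENNReal.ofReal_ne_top hfin') hcomp
    _ = lamStar * (∫⁻ s in Set.Ioc a b, ENNReal.ofReal (g s)).toReal := by
        rw [ENNReal.toReal_mul, ENNReal.toReal_ofReal hlamStar.le]

/-- Joint continuity and modulus-of-continuity estimate for
    𝔍̄₁(t,x) = ∫_{(t−x)⁺}^t Fᶜ(t−s) dĀ(s), where Ā is λ*-Lipschitz nondecreasing. -/
theorem limit_J1_continuity_estimate
    (Fc : ℝ → ℝ) (hFc_anti : Antitone Fc) (hFc_bdd : ∀ x, Fc x ∈ Set.Icc (0:ℝ) 1)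
    (hFc_neg : ∀ x, x < 0 → Fc x = 1)
    (hFc_right : ∀ x, ContinuousWithinAt Fc (Set.Ici x) x)
    (lamStar : ℝ) (hlamStar : 0 < lamStar)
    (A : StieltjesFunction ℝ) (hA_cont : Continuous A)
    (hA_neg : ∀ x, x ≤ 0 → A x = 0)
    (hA_lip : ∀ s t, 0 ≤ s → s ≤ t → A t - A s ≤ lamStar * (t - s))
    (J1 : ℝ → ℝ → ℝ)
    (hJ1 : ∀ t x, J1 t x = ∫ s in Set.Ioc (max (t - x) 0) t, Fc (t - s) ∂A.measure) :
    (Continuous Fc →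
      ContinuousOn (fun p : ℝ × ℝ => J1 p.1 p.2) (Set.Ici 0 ×ˢ Set.Ici 0)) ∧
    (∀ t t' x x', 0 ≤ t → t ≤ t' → 0 ≤ x → 0 ≤ x' →
      |J1 t' x' - J1 t x| ≤
        lamStar * (∫ s in (max (t - x) 0)..t, |Fc (t - s) - Fc (t' - s)|)
          + 2 * lamStar * (|t - t'| + |x - x'|)) := by
  have hle := J1aux_measure_le lamStar hlamStar A hA_cont hA_neg hA_lip
  have habs_sub : ∀ p q : ℝ, |p - q| ≤ |p| + |q| := fun p q => by
    rw [sub_eq_add_neg]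
    exact le_trans (abs_add_le _ _) (by rw [abs_neg])
  have hFc_abs : ∀ v : ℝ, |Fc v| ≤ 1 := fun v => abs_le.2
    ⟨by linarith [(hFc_bdd v).1], (hFc_bdd v).2⟩
  have hmono : ∀ c : ℝ, Monotone (fun s => Fc (c - s)) :=
    fun c p q hpq => hFc_anti (by linarith)
  have hint : ∀ (c d e : ℝ), IntegrableOn (fun s => Fc (c - s)) (Set.Ioc d e) A.measure := by
    intro c d e
    have : IsFiniteMeasure (A.measure.restrict (Set.Ioc d e)) := ⟨by
      rw [Measure.restrict_apply_univ, StieltjesFunction.measure_Ioc]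
      exact ENNReal.ofReal_lt_top⟩
    exact (integrable_const (1:ℝ)).mono' ((hmono c).measurable.aestronglyMeasurable)
      (ae_of_all _ fun s => by rw [Real.norm_eq_abs]; exact hFc_abs _)
  have est : ∀ t t' x x', 0 ≤ t → t ≤ t' → 0 ≤ x → 0 ≤ x' →
      |J1 t' x' - J1 t x| ≤
        lamStar * (∫ s in (max (t - x) 0)..t, |Fc (t - s) - Fc (t' - s)|)
          + 2 * lamStar * (|t - t'| + |x - x'|) := by
    intro t t' x x' ht htt' hx hx'
    rw [hJ1, hJ1]
    set a := max (t - x) 0 with ha_def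
    set a' := max (t' - x') 0 with ha'_def
    have ha0 : (0:ℝ) ≤ a := le_max_right _ _
    have ha'0 : (0:ℝ) ≤ a' := le_max_right _ _
    have hat : a ≤ t := max_le (by linarith) ht
    have hImeas : MeasurableSet (Set.Ioc a t) := measurableSet_Ioc
    have hI'meas : MeasurableSet (Set.Ioc a' t') := measurableSet_Ioc
    have hinth : IntegrableOn (fun s => Fc (t' - s)) (Set.Ioc a' t') A.measure := hint t' a' t'
    have hinth2 : IntegrableOn (fun s => Fc (t' - s)) (Set.Ioc a t) A.measure := hint t' a t
    have hintk : IntegrableOn (fun s => Fc (t - s)) (Set.Ioc a t) A.measure := hint t a t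
    have hsplit1 : ∫ s in Set.Ioc a' t', Fc (t' - s) ∂A.measure
        = (∫ s in Set.Ioc a' t' ∩ Set.Ioc a t, Fc (t' - s) ∂A.measure)
          + ∫ s in Set.Ioc a' t' \ Set.Ioc a t, Fc (t' - s) ∂A.measure :=
      (integral_inter_add_diff hImeas hinth).symm
    have hsplit2 : ∫ s in Set.Ioc a t, Fc (t' - s) ∂A.measure
        = (∫ s in Set.Ioc a' t' ∩ Set.Ioc a t, Fc (t' - s) ∂A.measure)
          + ∫ s in Set.Ioc a t \ Set.Ioc a' t', Fc (t' - s) ∂A.measure := by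
      rw [Set.inter_comm]
      exact (integral_inter_add_diff hI'meas hinth2).symm
    have hD2 : ∫ s in Set.Ioc a t, Fc (t' - s) ∂A.measure
          - ∫ s in Set.Ioc a t, Fc (t - s) ∂A.measure
        = ∫ s in Set.Ioc a t, (Fc (t' - s) - Fc (t - s)) ∂A.measure :=
      (integral_sub hinth2 hintk).symm
    have hfin1 : A.measure (Set.Ioc a' t' \ Set.Ioc a t) < ⊤ :=
      (measure_mono Set.diff_subset).trans_lt
        (by rw [StieltjesFunction.measure_Ioc]; exact ENNReal.ofReal_lt_top)
    have hfin2 : A.measure (Set.Ioc a t \ Set.Ioc a' t') < ⊤ :=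
      (measure_mono Set.diff_subset).trans_lt
        (by rw [StieltjesFunction.measure_Ioc]; exact ENNReal.ofReal_lt_top)
    have hsub : (Set.Ioc a' t' \ Set.Ioc a t) ∪ (Set.Ioc a t \ Set.Ioc a' t')
        ⊆ Set.Ioc (min a a') (max a a') ∪ Set.Ioc t t' := by
      intro s hs
      rcases hs with ⟨hs1, hs3⟩ | ⟨hs1, hs3⟩
      · rw [Set.mem_Ioc] at hs1
        rw [Set.mem_Ioc, not_and, not_le] at hs3
        by_cases hcase : a < s
        · exact Or.inr ⟨hs3 hcase, hs1.2⟩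
        · exact Or.inl ⟨lt_of_le_of_lt (min_le_right a a') hs1.1,
            le_trans (not_lt.1 hcase) (le_max_left a a')⟩
      · rw [Set.mem_Ioc] at hs1
        rw [Set.mem_Ioc, not_and, not_le] at hs3
        have hsa' : s ≤ a' := by
          by_contra hcon
          exact absurd (hs1.2.trans htt') (not_le.2 (hs3 (not_le.1 hcon)))
        exact Or.inl ⟨lt_of_le_of_lt (min_le_left a a') hs1.1,
          hsa'.trans (le_max_right a a')⟩
    have hA_M : A (max a a') - A (min a a') ≤ lamStar * (max a a' - min a a') :=
      hA_lip _ _ (le_min ha0 ha'0) min_le_max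
    have hA_t : A t' - A t ≤ lamStar * (t' - t) := hA_lip t t' ht htt'
    have hkey : A.measure (Set.Ioc a' t' \ Set.Ioc a t)
          + A.measure (Set.Ioc a t \ Set.Ioc a' t')
        ≤ ENNReal.ofReal ((A (max a a') - A (min a a')) + (A t' - A t)) := by
      rw [← measure_union disjoint_sdiff_sdiff (hImeas.diff hI'meas)]
      refine (measure_mono hsub).trans ((measure_union_le _ _).trans ?_)
      rw [StieltjesFunction.measure_Ioc, StieltjesFunction.measure_Ioc,
        ← ENNReal.ofReal_add (sub_nonneg.2 (A.mono min_le_max)) (sub_nonneg.2 (A.mono htt'))]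
    have hsum_toReal : (A.measure (Set.Ioc a' t' \ Set.Ioc a t)).toReal
          + (A.measure (Set.Ioc a t \ Set.Ioc a' t')).toReal
        ≤ (A (max a a') - A (min a a')) + (A t' - A t) := by
      rw [← ENNReal.toReal_add hfin1.ne hfin2.ne]
      exact ENNReal.toReal_le_of_le_ofReal
        (add_nonneg (sub_nonneg.2 (A.mono min_le_max)) (sub_nonneg.2 (A.mono htt'))) hkey
    have habs : max a a' - min a a' ≤ |t - t'| + |x - x'| := by
      rw [max_sub_min_eq_abs, abs_sub_comm]
      calc |a - a'| ≤ |(t - x) - (t' - x')| := abs_max_sub_max_le_abs _ _ _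
        _ ≤ |t - t'| + |x - x'| := by
          have he : (t - x) - (t' - x') = (t - t') - (x - x') := by ring
          rw [he]
          exact habs_sub _ _
    have hb1 : |∫ s in Set.Ioc a' t' \ Set.Ioc a t, Fc (t' - s) ∂A.measure|
        ≤ (A.measure (Set.Ioc a' t' \ Set.Ioc a t)).toReal := by
      have := norm_setIntegral_le_of_norm_le_const (C := 1) hfin1
        (f := fun s => Fc (t' - s)) (fun s _ => by rw [Real.norm_eq_abs]; exact hFc_abs _)
      rwa [Real.norm_eq_abs, one_mul, measureReal_def] at this
    have hb2 : |∫ s in Set.Ioc a t \ Set.Ioc a' t', Fc (t' - s) ∂A.measure|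
        ≤ (A.measure (Set.Ioc a t \ Set.Ioc a' t')).toReal := by
      have := norm_setIntegral_le_of_norm_le_const (C := 1) hfin2
        (f := fun s => Fc (t' - s)) (fun s _ => by rw [Real.norm_eq_abs]; exact hFc_abs _)
      rwa [Real.norm_eq_abs, one_mul, measureReal_def] at this
    have hgmeas : Measurable (fun s => |Fc (t - s) - Fc (t' - s)|) :=
      ((hmono t).measurable.sub (hmono t').measurable).abs
    have hb3 : |∫ s in Set.Ioc a t, (Fc (t' - s) - Fc (t - s)) ∂A.measure|
        ≤ ∫ s in Set.Ioc a t, |Fc (t - s) - Fc (t' - s)| ∂A.measure := by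
      calc |∫ s in Set.Ioc a t, (Fc (t' - s) - Fc (t - s)) ∂A.measure|
          = ‖∫ s in Set.Ioc a t, (Fc (t' - s) - Fc (t - s)) ∂A.measure‖ :=
            (Real.norm_eq_abs _).symm
        _ ≤ ∫ s in Set.Ioc a t, ‖Fc (t' - s) - Fc (t - s)‖ ∂A.measure :=
            norm_integral_le_integral_norm _
        _ = ∫ s in Set.Ioc a t, |Fc (t - s) - Fc (t' - s)| ∂A.measure :=
            integral_congr_ae (ae_of_all _ fun s => by
              simp only [Real.norm_eq_abs]; exact abs_sub_comm _ _)
    have hb4 : ∫ s in Set.Ioc a t, |Fc (t - s) - Fc (t' - s)| ∂A.measure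
        ≤ lamStar * ∫ s in Set.Ioc a t, |Fc (t - s) - Fc (t' - s)| :=
      J1aux_integral_le lamStar hlamStar A hle _ hgmeas (fun s => abs_nonneg _)
        (fun s => le_trans (habs_sub _ _) (by linarith [hFc_abs (t - s), hFc_abs (t' - s)])) a t
    have hIeq : ∫ s in Set.Ioc a t, |Fc (t - s) - Fc (t' - s)|
        = ∫ s in a..t, |Fc (t - s) - Fc (t' - s)| :=
      (intervalIntegral.integral_of_le hat).symm
    have hdecomp : (∫ s in Set.Ioc a' t', Fc (t' - s) ∂A.measure)
          - ∫ s in Set.Ioc a t, Fc (t - s) ∂A.measure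
        = (∫ s in Set.Ioc a t, (Fc (t' - s) - Fc (t - s)) ∂A.measure)
          + ((∫ s in Set.Ioc a' t' \ Set.Ioc a t, Fc (t' - s) ∂A.measure)
            - ∫ s in Set.Ioc a t \ Set.Ioc a' t', Fc (t' - s) ∂A.measure) := by
      linarith [hsplit1, hsplit2, hD2]
    have hc3 : lamStar * (max a a' - min a a') ≤ lamStar * (|t - t'| + |x - x'|) :=
      mul_le_mul_of_nonneg_left habs hlamStar.le
    have hc4 : t' - t ≤ |t - t'| + |x - x'| := by
      have h1 : |t - t'| = t' - t := by rw [abs_sub_comm]; exact abs_of_nonneg (by linarith)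
      have h2 : (0:ℝ) ≤ |x - x'| := abs_nonneg _
      linarith
    have hc6 : lamStar * (t' - t) ≤ lamStar * (|t - t'| + |x - x'|) :=
      mul_le_mul_of_nonneg_left hc4 hlamStar.le
    calc |(∫ s in Set.Ioc a' t', Fc (t' - s) ∂A.measure)
          - ∫ s in Set.Ioc a t, Fc (t - s) ∂A.measure|
        ≤ |∫ s in Set.Ioc a t, (Fc (t' - s) - Fc (t - s)) ∂A.measure|
          + (|∫ s in Set.Ioc a' t' \ Set.Ioc a t, Fc (t' - s) ∂A.measure|
            + |∫ s in Set.Ioc a t \ Set.Ioc a' t', Fc (t' - s) ∂A.measure|) := by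
          rw [hdecomp]
          exact (abs_add_le _ _).trans (add_le_add le_rfl (habs_sub _ _))
      _ ≤ lamStar * (∫ s in a..t, |Fc (t - s) - Fc (t' - s)|)
          + 2 * lamStar * (|t - t'| + |x - x'|) := by
          have hc1 : |∫ s in Set.Ioc a t, (Fc (t' - s) - Fc (t - s)) ∂A.measure|
              ≤ lamStar * ∫ s in a..t, |Fc (t - s) - Fc (t' - s)| :=
            hb3.trans (hb4.trans (le_of_eq (by rw [hIeq])))
          linarith [hb1, hb2, hsum_toReal, hA_M, hA_t, hc3, hc6]
  refine ⟨?_, est⟩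
  intro hFc_cont
  intro p hp
  have hpt : (0:ℝ) ≤ p.1 := hp.1
  have hpx : (0:ℝ) ≤ p.2 := hp.2
  rw [Metric.continuousWithinAt_iff]
  intro ε hε
  set T := p.1 + 1 with hT
  have hT0 : 0 < T := by rw [hT]; linarith
  have hUC : UniformContinuousOn Fc (Set.Icc 0 T) :=
    isCompact_Icc.uniformContinuousOn_of_continuous hFc_cont.continuousOn
  set ε' := ε / (2 * lamStar * T) with hε'
  have hε'0 : 0 < ε' := by rw [hε']; positivity
  obtain ⟨δ1, hδ1pos, hδ1⟩ := Metric.uniformContinuousOn_iff.1 hUC ε' hε'0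
  set δ := min δ1 (min 1 (ε / (8 * lamStar))) with hδ
  have hδ0 : 0 < δ := lt_min hδ1pos (lt_min one_pos (by positivity))
  refine ⟨δ, hδ0, ?_⟩
  intro q hq hqd
  have hq1 : (0:ℝ) ≤ q.1 := hq.1
  have hq2 : (0:ℝ) ≤ q.2 := hq.2
  have hd1 : |q.1 - p.1| < δ := by
    rw [← Real.dist_eq]
    calc dist q.1 p.1 ≤ dist q p := by rw [Prod.dist_eq]; exact le_max_left _ _
      _ < δ := hqd
  have hd2 : |q.2 - p.2| < δ := by
    rw [← Real.dist_eq]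
    calc dist q.2 p.2 ≤ dist q p := by rw [Prod.dist_eq]; exact le_max_right _ _
      _ < δ := hqd
  have key : ∀ t u x y, 0 ≤ t → t ≤ u → 0 ≤ x → 0 ≤ y → u ≤ T →
      |t - u| < δ → |x - y| < δ → |J1 u y - J1 t x| < ε := by
    intro t u x y ht htu hx hy huT hdtu hdxy
    refine lt_of_le_of_lt (est t u x y ht htu hx hy) ?_
    have hat : max (t - x) 0 ≤ t := max_le (by linarith) ht
    have hIb : (∫ s in (max (t - x) 0)..t, |Fc (t - s) - Fc (u - s)|) ≤ ε' * T := by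
      have h1 : ‖∫ s in (max (t - x) 0)..t, |Fc (t - s) - Fc (u - s)|‖
          ≤ ε' * |t - max (t - x) 0| := by
        refine intervalIntegral.norm_integral_le_of_norm_le_const ?_
        intro s hs
        rw [Set.uIoc_of_le hat, Set.mem_Ioc] at hs
        have h0s : 0 < s := lt_of_le_of_lt (le_max_right (t - x) 0) hs.1
        have hts1 : 0 ≤ t - s := by linarith [hs.2]
        have hts2 : t - s ≤ T := by linarith
        have hus1 : 0 ≤ u - s := by linarith [hs.2]
        have hus2 : u - s ≤ T := by linarith
        rw [Real.norm_eq_abs, abs_abs]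
        have hd := hδ1 (t - s) (Set.mem_Icc.2 ⟨hts1, hts2⟩) (u - s)
          (Set.mem_Icc.2 ⟨hus1, hus2⟩)
          (by
            rw [Real.dist_eq]
            have he : t - s - (u - s) = t - u := by ring
            rw [he]
            exact lt_of_lt_of_le hdtu (min_le_left _ _))
        rw [Real.dist_eq] at hd
        exact hd.le
      calc (∫ s in (max (t - x) 0)..t, |Fc (t - s) - Fc (u - s)|)
          ≤ |(∫ s in (max (t - x) 0)..t, |Fc (t - s) - Fc (u - s)|)| := le_abs_self _
        _ ≤ ε' * |t - max (t - x) 0| := by rw [← Real.norm_eq_abs]; exact h1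
        _ ≤ ε' * T := by
            refine mul_le_mul_of_nonneg_left ?_ hε'0.le
            rw [abs_of_nonneg (by linarith)]
            have := le_max_right (t - x) 0
            linarith
    have hmain1 : lamStar * (∫ s in (max (t - x) 0)..t, |Fc (t - s) - Fc (u - s)|) ≤ ε / 2 := by
      calc lamStar * (∫ s in (max (t - x) 0)..t, |Fc (t - s) - Fc (u - s)|)
          ≤ lamStar * (ε' * T) := mul_le_mul_of_nonneg_left hIb hlamStar.le
        _ = ε / 2 := by
            rw [hε']
            field_simp
    have hmain2 : 2 * lamStar * (|t - u| + |x - y|) < ε / 2 := by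
      have h2δ : |t - u| + |x - y| < 2 * δ := by linarith
      have hlt : 2 * lamStar * (|t - u| + |x - y|) < 2 * lamStar * (2 * δ) :=
        mul_lt_mul_of_pos_left h2δ (by positivity)
      have hδle : δ ≤ ε / (8 * lamStar) := le_trans (min_le_right _ _) (min_le_right _ _)
      have hle2 : 2 * lamStar * (2 * δ) ≤ ε / 2 := by
        calc 2 * lamStar * (2 * δ) = 4 * lamStar * δ := by ring
          _ ≤ 4 * lamStar * (ε / (8 * lamStar)) :=
            mul_le_mul_of_nonneg_left hδle (by positivity)
          _ = ε / 2 := by field_simp; ring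
      linarith
    linarith
  rcases le_or_gt p.1 q.1 with hc | hc
  · have hδle1 : δ ≤ 1 := le_trans (min_le_right _ _) (min_le_left _ _)
    have hqT : q.1 ≤ T := by
      rw [hT]
      have := le_abs_self (q.1 - p.1)
      linarith
    have := key p.1 q.1 p.2 q.2 hpt hc hpx hq2 hqT
      (by rw [abs_sub_comm]; exact hd1) (by rw [abs_sub_comm]; exact hd2)
    rw [Real.dist_eq]
    exact this
  · have hpT : p.1 ≤ T := by rw [hT]; linarith
    have := key q.1 p.1 q.2 p.2 hq1 hc.le hq2 hpx hpT hd1 hd2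
    rw [Real.dist_eq, abs_sub_comm]
    exact this
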